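/- Let D be a regular (216, 40, 4, 8)-PDS in the group G = (ℤ/2ℤ)³ × (ℤ/3ℤ)³, and let H be a subgroup of G of order 72 (equivalently, of index 3). Then |H ∩ D| = 8 or |H ∩ D| = 16. -/

import Mathlib

/-- The number of representations of `g` as `a * b⁻¹` with `a, b ∈ D`. -/
def diffReps {G : Type*} [Group G] [DecidableEq G] (D : Finset G) (g : G) : ℕ :=
  ((D ×ˢ D).filter (fun p => p.1 * p.2⁻¹ = g)).card

/-- `D` is a `(v, k, λ, μ)`-partial difference set in the finite group `G`. -/
def IsPDS {G : Type*} [Group G] [Fintype G] [DecidableEq G]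
    (D : Finset G) (v k l m : ℕ) : Prop :=
  Fintype.card G = v ∧ D.card = k ∧
  ∀ g : G, g ≠ 1 →
    (g ∈ D → diffReps D g = l) ∧ (g ∉ D → diffReps D g = m)

/-- `D` is regular: it does not contain the identity and is closed under inverses. -/
def IsRegularPDS {G : Type*} [Group G] (D : Finset G) : Prop :=
  (1 : G) ∉ D ∧ ∀ d : G, d ∈ D ↔ d⁻¹ ∈ D

/-- A regular PDS `D` is trivial if `D ∪ {e}` or `G \ D` is a subgroup of `G`. -/
def IsTrivialPDS {G : Type*} [Group G] (D : Finset G) : Prop :=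
  (∃ H : Subgroup G, (H : Set G) = insert (1 : G) ↑D) ∨
  (∃ H : Subgroup G, (H : Set G) = (↑D : Set G)ᶜ)

/-- The group `(ℤ/2ℤ)³ × (ℤ/3ℤ)³`, written multiplicatively. -/
abbrev G216 : Type := Multiplicative ((Fin 3 → ZMod 2) × (Fin 3 → ZMod 3))

/-- A regular `(216,40,4,8)`-PDS in `(ℤ/2ℤ)³ × (ℤ/3ℤ)³` meets every subgroup of
order 72 in either 8 or 16 elements. -/
theorem index_three_subgroup_meets_40_PDS (D : Finset G216)
    (hD : IsPDS D 216 40 4 8) (hreg : IsRegularPDS D)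
    (H : Subgroup G216) (hH : Nat.card H = 72) :
    ((H : Set G216) ∩ ↑D).ncard = 8 ∨ ((H : Set G216) ∩ ↑D).ncard = 16 := by
  classical
  obtain ⟨hcard, hk, hlm⟩ := hD
  obtain ⟨h1D, hinv⟩ := hreg
  letI : Fintype (G216 ⧸ H) := Fintype.ofFinite _
  have hQcard : Fintype.card (G216 ⧸ H) = 3 := by
    have h := Subgroup.card_eq_card_quotient_mul_card_subgroup H
    rw [hH, Nat.card_eq_fintype_card, Nat.card_eq_fintype_card, hcard] at h
    omega
  set f : G216 → G216 ⧸ H := QuotientGroup.mk with hfdef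
  have hmem : ∀ a b : G216, f a = f b ↔ a * b⁻¹ ∈ H := by
    intro a b
    rw [hfdef]
    rw [QuotientGroup.eq]
    rw [show a * b⁻¹ = (a⁻¹ * b)⁻¹ by rw [mul_inv_rev, inv_inv, mul_comm],
      Subgroup.inv_mem_iff]
  set x : (G216 ⧸ H) → ℕ := fun q => (D.filter (fun d => f d = q)).card with hxdef
  set P : Finset (G216 × G216) := (D ×ˢ D).filter (fun p => f p.1 = f p.2) with hPdef
  -- P.card as a sum of squares of fiber sizes
  have hB : P.card = ∑ q : G216 ⧸ H, x q * x q := by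
    rw [Finset.card_eq_sum_card_fiberwise
      (f := fun p => f p.1) (t := Finset.univ) (fun p _ => Finset.mem_univ _)]
    apply Finset.sum_congr rfl
    intro q _
    have hset : P.filter (fun p => f p.1 = q)
        = (D.filter fun d => f d = q) ×ˢ (D.filter fun d => f d = q) := by
      ext p
      simp only [hPdef, Finset.mem_filter, Finset.mem_product]
      constructor
      · rintro ⟨⟨⟨hp1, hp2⟩, heq⟩, hq⟩
        exact ⟨⟨hp1, hq⟩, hp2, heq ▸ hq⟩
      · rintro ⟨⟨hp1, hq1⟩, hp2, hq2⟩
        exact ⟨⟨⟨hp1, hp2⟩, hq1.trans hq2.symm⟩, hq1⟩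
    rw [hset, Finset.card_product]
  -- the subgroup as a finset
  set S : Finset G216 := Finset.univ.filter (fun g => g ∈ H) with hSdef
  have hScard : S.card = 72 := by
    have h2 : Nat.card {g : G216 // g ∈ H} = S.card := by
      rw [Nat.card_eq_fintype_card, hSdef, Fintype.card_subtype]
    rw [← h2]
    exact hH
  have h1S : (1 : G216) ∈ S := by simp [hSdef, H.one_mem]
  -- P.card as a sum of diffReps over S
  have hC : P.card = ∑ g ∈ S, diffReps D g := by
    rw [Finset.card_eq_sum_card_fiberwise (f := fun p => p.1 * p.2⁻¹) (t := S) ?_]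
    · apply Finset.sum_congr rfl
      intro g hg
      have hgH : g ∈ H := by
        rw [hSdef] at hg; simpa using hg
      unfold diffReps
      congr 1
      ext p
      simp only [hPdef, Finset.mem_filter, Finset.mem_product]
      constructor
      · rintro ⟨⟨hp, _⟩, h⟩; exact ⟨hp, h⟩
      · rintro ⟨hp, h⟩
        exact ⟨⟨hp, (hmem _ _).2 (h ▸ hgH)⟩, h⟩
    · intro p hp
      replace hp : p ∈ P := hp
      simp only [hPdef, Finset.mem_filter, Finset.mem_product] at hp
      rw [hSdef]
      simp only [Finset.coe_filter, Set.mem_setOf_eq, Finset.mem_filter, Finset.mem_univ, true_and]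
      exact (hmem _ _).1 hp.2
  -- diffReps at 1
  have hd1 : diffReps D (1 : G216) = 40 := by
    unfold diffReps
    rw [show (D ×ˢ D).filter (fun p => p.1 * p.2⁻¹ = (1 : G216)) = D.diag from ?_]
    · rw [Finset.diag_card]; exact hk
    · ext p
      simp only [Finset.mem_filter, Finset.mem_product, Finset.mem_diag, mul_inv_eq_one]
      constructor
      · rintro ⟨⟨hp1, _⟩, h3⟩; exact ⟨hp1, h3⟩
      · rintro ⟨hp1, h3⟩; exact ⟨⟨hp1, h3 ▸ hp1⟩, h3⟩
  set n : ℕ := (D.filter (fun d => d ∈ H)).card with hndef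
  have hxone : x (1 : G216 ⧸ H) = n := by
    have hset : (D.filter (fun d => f d = 1)) = D.filter (fun d => d ∈ H) := by
      ext d
      simp only [Finset.mem_filter, and_congr_right_iff]
      intro _
      rw [hfdef]
      exact QuotientGroup.eq_one_iff d
    show (D.filter (fun d => f d = 1)).card = n
    rw [hset, hndef]
  -- split the sum over S
  have hfin : (S.erase 1).filter (fun g => g ∈ D) = D.filter (fun d => d ∈ H) := by
    ext g
    simp only [Finset.mem_filter, Finset.mem_erase, hSdef, Finset.mem_univ, true_and]
    constructor
    · rintro ⟨⟨_, hH'⟩, hD'⟩; exact ⟨hD', hH'⟩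
    · rintro ⟨hD', hH'⟩
      exact ⟨⟨fun h => h1D (h ▸ hD'), hH'⟩, hD'⟩
  set t : ℕ := ((S.erase 1).filter (fun g => g ∉ D)).card with htdef
  have hnt : n + t = 71 := by
    have h := Finset.card_filter_add_card_filter_not
      (s := S.erase 1) (p := fun g => g ∈ D)
    rw [Finset.card_erase_of_mem h1S, hScard, hfin, ← hndef, ← htdef] at h
    omega
  have hsumS : ∑ g ∈ S, diffReps D g = 40 + (4 * n + 8 * t) := by
    have hA : ∑ g ∈ (S.erase 1).filter (fun g => g ∈ D), diffReps D g = 4 * n := by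
      rw [Finset.sum_congr rfl (g := fun _ => 4) (fun g hg => ?_), Finset.sum_const,
        smul_eq_mul, hfin, ← hndef, mul_comm]
      simp only [Finset.mem_filter, Finset.mem_erase] at hg
      exact (hlm g hg.1.1).1 hg.2
    have hBs : ∑ g ∈ (S.erase 1).filter (fun g => g ∉ D), diffReps D g = 8 * t := by
      rw [Finset.sum_congr rfl (g := fun _ => 8) (fun g hg => ?_), Finset.sum_const,
        smul_eq_mul, ← htdef, mul_comm]
      simp only [Finset.mem_filter, Finset.mem_erase] at hg
      exact (hlm g hg.1.1).2 hg.2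
    rw [← Finset.add_sum_erase S _ h1S, hd1,
      ← Finset.sum_filter_add_sum_filter_not (S.erase 1) (fun g => g ∈ D), hA, hBs]
  -- fibers of inverse cosets have the same size
  have hxinv : ∀ q : G216 ⧸ H, x q = x q⁻¹ := by
    intro q
    rw [hxdef]
    apply Finset.card_bij' (fun d _ => d⁻¹) (fun d _ => d⁻¹)
    · intro d _; exact inv_inv d
    · intro d _; exact inv_inv d
    · intro d hd
      simp only [Finset.mem_filter] at hd ⊢
      refine ⟨(hinv d).1 hd.1, ?_⟩
      rw [hfdef] at hd ⊢
      rw [show ((d⁻¹ : G216) : G216 ⧸ H) = ((d : G216) : G216 ⧸ H)⁻¹ from rfl, hd.2]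
    · intro d hd
      simp only [Finset.mem_filter] at hd ⊢
      refine ⟨(hinv d).1 hd.1, ?_⟩
      rw [hfdef] at hd ⊢
      rw [show ((d⁻¹ : G216) : G216 ⧸ H) = ((d : G216) : G216 ⧸ H)⁻¹ from rfl, hd.2,
        inv_inv]
  -- total size of D spread over fibers
  have hsumx : ∑ q : G216 ⧸ H, x q = 40 := by
    rw [← hk]
    exact (Finset.card_eq_sum_card_fiberwise (fun d _ => Finset.mem_univ (f d))).symm
  -- enumerate the quotient
  obtain ⟨a, ha⟩ := Fintype.exists_ne_of_one_lt_card
    (by omega : 1 < Fintype.card (G216 ⧸ H)) (1 : G216 ⧸ H)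
  have hainv1 : a⁻¹ ≠ 1 := fun h => ha (by rw [← inv_inv a, h, inv_one])
  have hainva : a⁻¹ ≠ a := by
    intro h
    have h2 : a ^ 2 = 1 := by
      rw [sq]; nth_rewrite 1 [← h]; simp
    have hd2 : orderOf a ∣ 2 := orderOf_dvd_of_pow_eq_one h2
    have hd3 : orderOf a ∣ 3 := by
      have h3 := orderOf_dvd_card (x := a)
      rwa [hQcard] at h3
    have h1 : orderOf a ∣ 1 := (Nat.dvd_sub hd3 hd2)
    exact ha (orderOf_eq_one_iff.mp (Nat.dvd_one.mp h1))
  have hnm1 : (1 : G216 ⧸ H) ∉ ({a, a⁻¹} : Finset (G216 ⧸ H)) := by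
    simp only [Finset.mem_insert, Finset.mem_singleton]
    push_neg
    exact ⟨Ne.symm ha, Ne.symm hainv1⟩
  have hnm2 : a ∉ ({a⁻¹} : Finset (G216 ⧸ H)) := by
    simpa using Ne.symm hainva
  have hU : (Finset.univ : Finset (G216 ⧸ H)) = {1, a, a⁻¹} := by
    symm
    apply Finset.eq_univ_of_card
    rw [hQcard, Finset.card_insert_of_notMem hnm1, Finset.card_insert_of_notMem hnm2,
      Finset.card_singleton]
  set m : ℕ := x a with hmdef
  have hxainv : x a⁻¹ = m := (hxinv a).symm
  have e1 : n + 2 * m = 40 := by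
    have h := hsumx
    rw [hU, Finset.sum_insert hnm1, Finset.sum_insert hnm2, Finset.sum_singleton,
      hxone, hxainv, ← hmdef] at h
    omega
  have e2 : n * n + (m * m + m * m) = 40 + (4 * n + 8 * t) := by
    have h := hB
    rw [hU, Finset.sum_insert hnm1, Finset.sum_insert hnm2, Finset.sum_singleton,
      hxone, hxainv, ← hmdef] at h
    rw [hC, hsumS] at h
    omega
  have hgoal : ((H : Set G216) ∩ ↑D).ncard = n := by
    have hset : (H : Set G216) ∩ ↑D = ↑(D.filter (fun d => d ∈ H)) := by
      ext g
      simp only [Set.mem_inter_iff, SetLike.mem_coe, Finset.coe_filter,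
        Set.mem_setOf_eq, Finset.mem_coe]
      exact and_comm
    rw [hset, Set.ncard_coe_finset, hndef]
  rw [hgoal]
  have key : 3 * (((n : ℤ) - 8) * ((n : ℤ) - 16)) = 0 := by
    have e1' : (n : ℤ) + 2 * m = 40 := by exact_mod_cast e1
    have e2' : (n : ℤ) * n + ((m : ℤ) * m + (m : ℤ) * m) = 40 + (4 * n + 8 * t) := by
      exact_mod_cast e2
    have e3' : (n : ℤ) + t = 71 := by exact_mod_cast hnt
    linear_combination 2 * e2' + 16 * e3' - (2 * (m : ℤ) + 40 - (n : ℤ)) * e1'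
  have key2 : ((n : ℤ) - 8) * ((n : ℤ) - 16) = 0 := by linarith
  rcases mul_eq_zero.mp key2 with h | h
  · left; omega
  · right; omega
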